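/- Let D : 𝒳 → [0,1] be a function on a finite set 𝒳, let k, δ > 0, and let Y⁺ be uniform on a set Max^k_D of 2^k elements where D is largest. Then for any distribution Y on 𝒳 with min-entropy at least k + log₂(1/δ), the probability over x ← Y that D(x) > E_{x'←Y⁺} D(x') is strictly less than δ. -/

import Mathlib

open scoped Classical
open Finset

/-- If `Y` has min-entropy at least `k + log₂(1/δ)`, the probability over `x ← Y`
that `D(x)` exceeds the average of `D` on a top-`2^k` set is strictly less than `δ`. -/
theorem stmt4 {α : Type*} [Fintype α]
    (D : α → ℝ) (hD : ∀ x, D x ∈ Set.Icc (0:ℝ) 1)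
    (k : ℕ) (δ : ℝ) (hδ : 0 < δ)
    (S : Finset α) (hScard : S.card = 2 ^ k)
    (hStop : ∀ x ∈ S, ∀ x' ∉ S, D x' ≤ D x)
    (Y : α → ℝ) (hY0 : ∀ x, 0 ≤ Y x) (hY1 : ∑ x, Y x = 1)
    (hYk : ∀ x, Y x ≤ (2:ℝ) ^ (-((k : ℝ) + Real.logb 2 (1 / δ)))) :
    ∑ x ∈ Finset.univ.filter
        (fun x => ((2:ℝ) ^ k)⁻¹ * ∑ x' ∈ S, D x' < D x), Y x < δ := by
  set T := Finset.univ.filter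
      (fun x => ((2:ℝ) ^ k)⁻¹ * ∑ x' ∈ S, D x' < D x) with hT
  have h2k : (0:ℝ) < (2:ℝ) ^ k := by positivity
  -- the bound on Y equals δ / 2^k
  have hB : (2:ℝ) ^ (-((k : ℝ) + Real.logb 2 (1 / δ))) = δ / 2 ^ k := by
    rw [Real.rpow_neg (by norm_num), Real.rpow_add (by norm_num),
      Real.rpow_logb (by norm_num) (by norm_num) (by positivity),
      Real.rpow_natCast]
    field_simp
  -- T ⊆ S
  have hTS : T ⊆ S := by
    intro x hx
    rw [hT, Finset.mem_filter] at hx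
    by_contra hxS
    have hle : (2:ℝ) ^ k * D x ≤ ∑ x' ∈ S, D x' := by
      calc (2:ℝ) ^ k * D x = ∑ _x' ∈ S, D x := by
            rw [Finset.sum_const, hScard]; push_cast; ring
        _ ≤ ∑ x' ∈ S, D x' := by
            exact Finset.sum_le_sum (fun x' hx' => hStop x' hx' x hxS)
    have := hx.2
    rw [inv_mul_lt_iff₀ h2k] at this
    linarith
  -- T ≠ S
  have hTneS : T ≠ S := by
    intro hEq
    have : ∑ x ∈ S, ((2:ℝ) ^ k)⁻¹ * ∑ x' ∈ S, D x' < ∑ x ∈ S, D x := by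
      apply Finset.sum_lt_sum_of_nonempty
      · rw [← Finset.card_pos, hScard]; positivity
      · intro x hx
        have : x ∈ T := hEq ▸ hx
        rw [hT, Finset.mem_filter] at this
        exact this.2
    rw [Finset.sum_const, hScard] at this
    rw [nsmul_eq_mul] at this
    push_cast at this
    rw [mul_inv_cancel_left₀ (ne_of_gt h2k)] at this
    exact lt_irrefl _ this
  have hTcard : (T.card : ℝ) ≤ (2:ℝ) ^ k - 1 := by
    have hlt : T.card < 2 ^ k := by
      rw [← hScard]
      exact Finset.card_lt_card (lt_of_le_of_ne hTS hTneS)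
    have h1 : T.card + 1 ≤ 2 ^ k := hlt
    have h2 : (T.card : ℝ) + 1 ≤ (2:ℝ) ^ k := by exact_mod_cast h1
    linarith
  calc ∑ x ∈ T, Y x ≤ ∑ _x ∈ T, δ / 2 ^ k := by
        exact Finset.sum_le_sum (fun x _ => hB ▸ hYk x)
    _ = T.card * (δ / 2 ^ k) := by rw [Finset.sum_const, nsmul_eq_mul]
    _ ≤ ((2:ℝ)^k - 1) * (δ / 2 ^ k) := by
        apply mul_le_mul_of_nonneg_right hTcard; positivity
    _ < δ := by
        rw [div_eq_mul_inv]
        have : ((2:ℝ)^k - 1) * (δ * ((2:ℝ)^k)⁻¹) = δ * (((2:ℝ)^k - 1) / 2^k) := by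
          field_simp
        rw [this]
        nth_rewrite 2 [← mul_one δ]
        apply mul_lt_mul_of_pos_left _ hδ
        rw [div_lt_one h2k]; linarith
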